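/- Let A₁, …, A_N be entrywise nonnegative real n×n matrices and W₁, …, W_N real m×m matrices satisfying ∑_{i=1}^N ‖A_i‖₁ ‖W_i‖_∞ ≤ κ for some κ ∈ [0, 1). Then ‖∑_{i=1}^N A_iᵀ ⊗ W_i‖_∞ ≤ κ and the spectral radius of ∑_{i=1}^N |A_iᵀ ⊗ W_i| is at most κ < 1; consequently, for every componentwise non-expansive φ : ℝ → ℝ and all real m×n matrices B₁, …, B_N, the equation X = φ(∑_{i=1}^N (W_i X A_i + B_i)) has exactly one solution. -/

import Mathlib

open Matrix Kronecker
open scoped NNReal ENNReal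

/-- The spectral radius of a real square matrix: the supremum of the moduli of its
complex eigenvalues (elements of the spectrum of the matrix viewed over `ℂ`). -/
noncomputable def specRad {ι : Type*} [Fintype ι] [DecidableEq ι]
    (M : Matrix ι ι ℝ) : ENNReal :=
  spectralRadius ℂ (M.map Complex.ofReal)

/-- The maximum absolute row-sum norm of a real matrix:
the supremum over rows `i` of `∑ j, |M i j|`. -/
noncomputable def rowSumNorm {ι κ : Type*} [Fintype ι] [Fintype κ]
    (M : Matrix ι κ ℝ) : ℝ :=
  ⨆ i, ∑ j, |M i j|

/-- The maximum absolute column-sum norm of a real matrix: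
the supremum over columns `j` of `∑ i, |M i j|`. -/
noncomputable def colSumNorm {ι κ : Type*} [Fintype ι] [Fintype κ]
    (M : Matrix ι κ ℝ) : ℝ :=
  ⨆ j, ∑ i, |M i j|

lemma rowSumNorm_nonneg {ι κ' : Type*} [Fintype ι] [Fintype κ'] (M : Matrix ι κ' ℝ) :
    0 ≤ rowSumNorm M :=
  Real.iSup_nonneg fun _ => Finset.sum_nonneg fun _ _ => abs_nonneg _

lemma colSumNorm_nonneg {ι κ' : Type*} [Fintype ι] [Fintype κ'] (M : Matrix ι κ' ℝ) :
    0 ≤ colSumNorm M :=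
  Real.iSup_nonneg fun _ => Finset.sum_nonneg fun _ _ => abs_nonneg _

lemma rowSum_le {ι κ' : Type*} [Fintype ι] [Fintype κ'] (M : Matrix ι κ' ℝ) (i : ι) :
    ∑ j, |M i j| ≤ rowSumNorm M := by
  exact le_ciSup (f := fun i => ∑ j, |M i j|) (Set.Finite.bddAbove (Set.finite_range _)) i

lemma colSum_le {ι κ' : Type*} [Fintype ι] [Fintype κ'] (M : Matrix ι κ' ℝ) (j : κ') :
    ∑ i, |M i j| ≤ colSumNorm M := by
  exact le_ciSup (f := fun j => ∑ i, |M i j|) (Set.Finite.bddAbove (Set.finite_range _)) j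

/-- The key estimate. -/
lemma key {m n N : ℕ}
    (A : Fin N → Matrix (Fin n) (Fin n) ℝ)
    (W : Fin N → Matrix (Fin m) (Fin m) ℝ)
    (κ : ℝ)
    (h : ∑ i, colSumNorm (A i) * rowSumNorm (W i) ≤ κ)
    (p : Fin m) (j : Fin n) :
    ∑ i, (∑ k, |A i k j|) * (∑ q, |W i p q|) ≤ κ := by
  refine le_trans (Finset.sum_le_sum fun i _ => ?_) h
  refine mul_le_mul (colSum_le _ _) (rowSum_le _ _)
    (Finset.sum_nonneg fun _ _ => abs_nonneg _) (colSumNorm_nonneg _)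

section SpecRad

attribute [local instance] Matrix.linftyOpNormedRing Matrix.linftyOpNormedAlgebra

/-- The spectral radius is at most the maximum row sum, for a real matrix. -/
lemma specRad_le_of_rowSums {ι : Type*} [Fintype ι] [DecidableEq ι]
    (M : Matrix ι ι ℝ) (κ : ℝ) (hκ0 : 0 ≤ κ)
    (h : ∀ i, ∑ j, |M i j| ≤ κ) : specRad M ≤ ENNReal.ofReal κ := by
  rcases isEmpty_or_nonempty ι with hE | hne
  · haveI : Subsingleton (Matrix ι ι ℂ) := ⟨fun a b => Matrix.ext fun i => (hE.elim i)⟩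
    have hsp : spectrum ℂ (M.map Complex.ofReal) = ∅ := by
      ext x; simp [spectrum.mem_iff, isUnit_of_subsingleton]
    unfold specRad spectralRadius
    rw [hsp]
    simp
  · refine le_trans (spectrum.spectralRadius_le_nnnorm (𝕜 := ℂ) (M.map Complex.ofReal)) ?_
    rw [← enorm_eq_nnnorm, ← ofReal_norm]
    refine ENNReal.ofReal_le_ofReal ?_
    rw [Matrix.linfty_opNorm_def]
    have hκ' : ((κ.toNNReal : ℝ≥0) : ℝ) = κ := Real.coe_toNNReal κ hκ0
    rw [← hκ', NNReal.coe_le_coe]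
    refine Finset.sup_le fun i _ => ?_
    rw [← NNReal.coe_le_coe, NNReal.coe_sum, hκ']
    refine le_trans (le_of_eq ?_) (h i)
    refine Finset.sum_congr rfl fun j _ => ?_
    simp [Matrix.map_apply, Real.norm_eq_abs]

end SpecRad

section FixedPt

attribute [local instance] Matrix.normedAddCommGroup

lemma exists_unique_fixed {m n N : ℕ}
    (A : Fin N → Matrix (Fin n) (Fin n) ℝ)
    (W : Fin N → Matrix (Fin m) (Fin m) ℝ)
    (κ : ℝ) (hκ0 : 0 ≤ κ) (hκ1 : κ < 1)
    (h : ∑ i, colSumNorm (A i) * rowSumNorm (W i) ≤ κ)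
    (φ : ℝ → ℝ) (hφ : ∀ a b : ℝ, |φ a - φ b| ≤ |a - b|)
    (B : Fin N → Matrix (Fin m) (Fin n) ℝ) :
    ∃! X : Matrix (Fin m) (Fin n) ℝ, X = (∑ i, (W i * X * A i + B i)).map φ := by
  haveI : @CompleteSpace (Matrix (Fin m) (Fin n) ℝ) PseudoEMetricSpace.toUniformSpace :=
    (by infer_instance : CompleteSpace (Fin m → Fin n → ℝ))
  set f : Matrix (Fin m) (Fin n) ℝ → Matrix (Fin m) (Fin n) ℝ :=
    fun X => (∑ i, (W i * X * A i + B i)).map φ with hf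
  have hLip : ∀ X Y, dist (f X) (f Y) ≤ κ * dist X Y := by
    intro X Y
    rw [dist_eq_norm]
    refine (Matrix.norm_le_iff (mul_nonneg hκ0 dist_nonneg)).2 fun p j => ?_
    have hent : ∀ q k, |(X - Y) q k| ≤ dist X Y := by
      intro q k
      rw [dist_eq_norm, ← Real.norm_eq_abs]
      exact Matrix.norm_entry_le_entrywise_sup_norm (X - Y)
    have hM : (∑ i, (W i * (X - Y) * A i)) =
        (∑ i, (W i * X * A i + B i)) - (∑ i, (W i * Y * A i + B i)) := by
      rw [← Finset.sum_sub_distrib]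
      refine Finset.sum_congr rfl fun i _ => ?_
      rw [Matrix.mul_sub, Matrix.sub_mul]
      abel
    have hdiff : (∑ i, (W i * X * A i + B i)) p j - (∑ i, (W i * Y * A i + B i)) p j
        = ∑ i, (W i * (X - Y) * A i) p j := by
      rw [← Matrix.sub_apply, ← hM, Matrix.sum_apply]
    have hbound : |∑ i, (W i * (X - Y) * A i) p j| ≤ κ * dist X Y := by
      refine le_trans (Finset.abs_sum_le_sum_abs _ _) ?_
      have : ∀ i : Fin N, |(W i * (X - Y) * A i) p j|
          ≤ (∑ k, |A i k j|) * (∑ q, |W i p q|) * dist X Y := by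
        intro i
        have hexp : (W i * (X - Y) * A i) p j = ∑ k, ∑ q, W i p q * (X - Y) q k * A i k j := by
          simp only [Matrix.mul_apply, Finset.sum_mul]
        rw [hexp]
        refine le_trans (Finset.abs_sum_le_sum_abs _ _) ?_
        calc ∑ k, |∑ q, W i p q * (X - Y) q k * A i k j|
            ≤ ∑ k, ∑ q, |W i p q| * |(X - Y) q k| * |A i k j| := by
              refine Finset.sum_le_sum fun k _ => ?_
              refine le_trans (Finset.abs_sum_le_sum_abs _ _) ?_
              refine Finset.sum_le_sum fun q _ => ?_
              rw [abs_mul, abs_mul]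
          _ ≤ ∑ k, ∑ q, |W i p q| * dist X Y * |A i k j| := by
              refine Finset.sum_le_sum fun k _ => Finset.sum_le_sum fun q _ => ?_
              have := hent q k
              have h1 : |W i p q| * |(X - Y) q k| ≤ |W i p q| * dist X Y :=
                mul_le_mul_of_nonneg_left this (abs_nonneg _)
              exact mul_le_mul_of_nonneg_right h1 (abs_nonneg _)
          _ = (∑ k, |A i k j|) * (∑ q, |W i p q|) * dist X Y := by
              rw [Finset.sum_mul, Finset.sum_mul]
              refine Finset.sum_congr rfl fun k _ => ?_
              rw [Finset.mul_sum, Finset.sum_mul]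
              refine Finset.sum_congr rfl fun q _ => ?_
              ring
      refine le_trans (Finset.sum_le_sum fun i _ => this i) ?_
      rw [← Finset.sum_mul]
      exact mul_le_mul_of_nonneg_right (key A W κ h p j) dist_nonneg
    calc ‖(f X - f Y) p j‖ = |φ ((∑ i, (W i * X * A i + B i)) p j)
          - φ ((∑ i, (W i * Y * A i + B i)) p j)| := by
          simp [hf, Matrix.map_apply, Real.norm_eq_abs]
      _ ≤ |(∑ i, (W i * X * A i + B i)) p j - (∑ i, (W i * Y * A i + B i)) p j| := hφ _ _
      _ = |∑ i, (W i * (X - Y) * A i) p j| := by rw [hdiff]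
      _ ≤ κ * dist X Y := hbound
  have hC : ContractingWith κ.toNNReal f := by
    constructor
    · rwa [← Real.coe_toNNReal κ hκ0, NNReal.coe_lt_one] at hκ1
    · refine LipschitzWith.of_dist_le_mul fun X Y => ?_
      rw [Real.coe_toNNReal κ hκ0]
      exact hLip X Y
  refine ⟨ContractingWith.fixedPoint f hC, (hC.fixedPoint_isFixedPt).symm, ?_⟩
  intro Y hY
  exact hC.fixedPoint_unique hY.symm

end FixedPt

theorem stmt_13 {m n N : ℕ}
    (A : Fin N → Matrix (Fin n) (Fin n) ℝ) (hA : ∀ i, ∀ j k, 0 ≤ A i j k)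
    (W : Fin N → Matrix (Fin m) (Fin m) ℝ)
    (κ : ℝ) (hκ0 : 0 ≤ κ) (hκ1 : κ < 1)
    (h : ∑ i, colSumNorm (A i) * rowSumNorm (W i) ≤ κ) :
    rowSumNorm (∑ i, (A i)ᵀ ⊗ₖ W i) ≤ κ ∧
    specRad (∑ i, ((A i)ᵀ ⊗ₖ W i).map fun a => |a|) ≤ ENNReal.ofReal κ ∧
    ∀ φ : ℝ → ℝ, (∀ a b : ℝ, |φ a - φ b| ≤ |a - b|) →
      ∀ B : Fin N → Matrix (Fin m) (Fin n) ℝ,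
        ∃! X : Matrix (Fin m) (Fin n) ℝ, X = (∑ i, (W i * X * A i + B i)).map φ := by
  have hmid : ∀ (j : Fin n) (p : Fin m),
      ∑ y : Fin n × Fin m, ∑ i, |((A i)ᵀ ⊗ₖ W i) (j, p) y| ≤ κ := by
    intro j p
    calc ∑ y : Fin n × Fin m, ∑ i, |((A i)ᵀ ⊗ₖ W i) (j, p) y|
        = ∑ i, ∑ y : Fin n × Fin m, |((A i)ᵀ ⊗ₖ W i) (j, p) y| := Finset.sum_comm
      _ = ∑ i, (∑ k, |A i k j|) * (∑ q, |W i p q|) := by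
          refine Finset.sum_congr rfl fun i _ => ?_
          rw [Fintype.sum_prod_type, Finset.sum_mul_sum]
          simp [Matrix.kroneckerMap_apply, abs_mul, Matrix.transpose_apply]
      _ ≤ κ := key A W κ h p j
  have hrow : ∀ x : Fin n × Fin m,
      ∑ y : Fin n × Fin m, |(∑ i, (A i)ᵀ ⊗ₖ W i) x y| ≤ κ := by
    rintro ⟨j, p⟩
    refine le_trans (Finset.sum_le_sum fun y _ => ?_) (hmid j p)
    simp only [Matrix.sum_apply]
    exact Finset.abs_sum_le_sum_abs _ _
  refine ⟨Real.iSup_le hrow hκ0, ?_, fun φ hφ B => exists_unique_fixed A W κ hκ0 hκ1 h φ hφ B⟩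
  refine specRad_le_of_rowSums _ κ hκ0 ?_
  rintro ⟨j, p⟩
  refine le_trans (le_of_eq ?_) (hmid j p)
  refine Finset.sum_congr rfl fun y _ => ?_
  rw [Matrix.sum_apply]
  rw [abs_of_nonneg (Finset.sum_nonneg fun i _ => by simp [Matrix.map_apply, abs_nonneg]; positivity)]
  refine Finset.sum_congr rfl fun i _ => by simp [Matrix.map_apply]
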